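/- Let (M, ω) be a closed 2n-dimensional symplectic manifold and M → E → B a fibration such that π₁(B) acts trivially on H^{2n}(M; ℝ). Let τ ∈ E₃^{0,2} be a class (in the Leray–Serre spectral sequence with real coefficients) restricting to [ω], surviving to the E₃ page, with τ^{n+1} = 0 (as [ω]^{n+1} lives in H^{2n+2}(M) = 0 on the fiber). Then d₃(τ) ⊗ [ω^n] = 0 in E₃^{3,2n}; in particular if the cup-product pairing E₃^{3,0} ⊗ H^{2n}(M;ℝ) → E₃^{3,2n} is injective then d₃(τ) = 0 over ℝ, i.e. d₃(τ) is torsion in the integral spectral sequence. -/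
import Mathlib


/-- (Algebraic core of the spectral sequence argument, Leray–Serre with real
coefficients.) The differential `d₃` is a derivation on the graded-commutative algebra
`E₃`; if `τ` (the class restricting to `[ω]`, of even total degree, so that the ring it
generates is commutative) satisfies `τ^{n+1} = 0` — as `[ω]^{n+1}` lives in
`H^{2n+2}(M) = 0` — then `0 = d₃(τ^{n+1}) = (n+1)·d₃(τ)·τ^n`, so over `ℝ`
`d₃(τ) · τ^n = 0` (i.e. `d₃(τ) ⊗ [ω^n] = 0` in `E₃^{3,2n}`); in particular, if
multiplication by `τ^n` (the cup-product pairing `E₃^{3,0} ⊗ H^{2n}(M;ℝ) → E₃^{3,2n}`)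
is injective then `d₃(τ) = 0` over `ℝ`, i.e. `d₃(τ)` is torsion integrally. -/
theorem d3_tau_mul_tau_pow_eq_zero
    {A : Type*} [CommRing A] [Algebra ℝ A]
    (d : Derivation ℝ A A) (n : ℕ) (τ : A)
    (h : τ ^ (n + 1) = 0) :
    d τ * τ ^ n = 0 ∧
      (Function.Injective (fun x : A => x * τ ^ n) → d τ = 0) := by
  have h0 : (n + 1 : ℕ) • τ ^ n • d τ = 0 := by
    have := congrArg d h
    rw [Derivation.leibniz_pow, map_zero, Nat.add_sub_cancel] at this
    exact this
  have h1 : d τ * τ ^ n = 0 := by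
    have h2 : ((n + 1 : ℝ)) • (τ ^ n • d τ) = 0 := by
      rw [← Nat.cast_smul_eq_nsmul ℝ] at h0; exact_mod_cast h0
    have h3 : τ ^ n • d τ = 0 := by
      have hn : (n + 1 : ℝ) ≠ 0 := by positivity
      exact (smul_eq_zero_iff_right hn).mp h2
    rw [smul_eq_mul] at h3
    rw [mul_comm]; exact h3
  refine ⟨h1, fun hinj => ?_⟩
  have := hinj (a₁ := d τ) (a₂ := 0) (by simpa using h1)
  simpa using this
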